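/- (Theorem 1) Given a labeled MDP M, its augmented MDP M', an LTLf formula φ over AP, and the corresponding LTL formula g(φ), it holds that max_{π ∈ Π} Pr(M^π ⊨ φ) = max_{π' ∈ Π'} Pr(M'^{π'} ⊨ g(φ)), where Π is the set of all policies of M, Π' is the set of all policies of M', Pr(M^π ⊨ φ) is the probability (under the measure induced by π) of the paths of M that satisfy φ under finite-trace semantics, and Pr(M'^{π'} ⊨ g(φ)) is the probability of the infinite paths of M' whose labeling satisfies g(φ) under LTL semantics. -/

import Mathlib

open scoped ENNReal

namespace LTLfMDP

/-- A labeled Markov decision process (data part): transition probabilities,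
enabled actions, initial state and labeling function. -/
structure MDP (S A AP : Type) where
  P : S → A → S → ℝ≥0∞
  enabled : S → Set A
  init : S
  label : S → Set AP

/-- A finite path from the initial state: the list of action/successor-state
steps taken (the implicit first state is `init`). -/
abbrev FinPath (S A : Type) := List (A × S)

/-- An infinite path from the initial state: at time `i` the action taken and
the successor state reached (the implicit first state is `init`). -/
abbrev InfPath (S A : Type) := ℕ → A × S

/-- A policy maps every finite path to an action. -/
abbrev Policy (S A : Type) := FinPath S A → A

variable {S A AP : Type}

/-- Well-formedness of a labeled MDP: every state has an enabled action and
the transition probabilities of enabled actions sum to one. -/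
def MDP.IsWF [Fintype S] (M : MDP S A AP) : Prop :=
  (∀ s : S, (M.enabled s).Nonempty) ∧
    ∀ (s : S) (a : A), a ∈ M.enabled s → (∑ s' : S, M.P s a s') = 1

/-- The last state of a finite path (`init` for the empty path). -/
def MDP.lastState (M : MDP S A AP) (l : FinPath S A) : S :=
  (l.map Prod.snd).getLastD M.init

/-- The `i`-th state `s_i` along a finite path (`s_0 = init`). -/
def MDP.stateAtF (M : MDP S A AP) (l : FinPath S A) (i : ℕ) : S :=
  M.lastState (l.take i)

/-- A finite path of the MDP: every action is enabled and every transition has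
positive probability. -/
def MDP.ValidFin (M : MDP S A AP) (l : FinPath S A) : Prop :=
  ∀ i (h : i < l.length),
    (l.get ⟨i, h⟩).1 ∈ M.enabled (M.stateAtF l i) ∧
      0 < M.P (M.stateAtF l i) (l.get ⟨i, h⟩).1 (l.get ⟨i, h⟩).2

/-- The `i`-th state `s_i` along an infinite path (`s_0 = init`). -/
def MDP.stateAtI (M : MDP S A AP) (w : InfPath S A) : ℕ → S
  | 0 => M.init
  | i + 1 => (w i).2

/-- An infinite path of the MDP: every action is enabled and every transition
has positive probability. -/
def MDP.ValidInf (M : MDP S A AP) (w : InfPath S A) : Prop :=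
  ∀ i : ℕ,
    (w i).1 ∈ M.enabled (M.stateAtI w i) ∧
      0 < M.P (M.stateAtI w i) (w i).1 (M.stateAtI w (i + 1))

/-- A policy of the MDP chooses an enabled action after every finite path. -/
def MDP.IsPolicy (M : MDP S A AP) (π : Policy S A) : Prop :=
  ∀ l : FinPath S A, π l ∈ M.enabled (M.lastState l)

/-- The finite prefix of length `n` of an infinite path. -/
def takeI (w : InfPath S A) (n : ℕ) : FinPath S A :=
  (List.range n).map w

/-- A finite path is `π`-consistent if each of its actions is the one `π`
assigns to the corresponding proper prefix. -/
def ConsistentFin (π : Policy S A) (l : FinPath S A) : Prop :=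
  ∀ i (h : i < l.length), (l.get ⟨i, h⟩).1 = π (l.take i)

/-- `Paths^π(s_init)`: the set of `π`-consistent infinite paths of the MDP. -/
def MDP.PathsSet (M : MDP S A AP) (π : Policy S A) : Set (InfPath S A) :=
  { w | M.ValidInf w ∧ ∀ i : ℕ, (w i).1 = π (takeI w i) }

/-- The cylinder set of a finite path: all `π`-consistent infinite paths of the
MDP extending it. -/
def MDP.Cyl (M : MDP S A AP) (π : Policy S A) (l : FinPath S A) :
    Set (InfPath S A) :=
  { w | w ∈ M.PathsSet π ∧ takeI w l.length = l }

/-- The σ-algebra generated by the cylinder sets of (valid, `π`-consistent)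
finite paths. -/
def MDP.cylSigma (M : MDP S A AP) (π : Policy S A) :
    MeasurableSpace (InfPath S A) :=
  MeasurableSpace.generateFrom
    { C | ∃ l : FinPath S A, M.ValidFin l ∧ ConsistentFin π l ∧ C = M.Cyl π l }

/-- The product of the transition probabilities along a finite path starting
in a given state. -/
noncomputable def MDP.weightFrom (M : MDP S A AP) : S → List (A × S) → ℝ≥0∞
  | _, [] => 1
  | s, (a, s') :: rest => M.P s a s' * M.weightFrom s' rest

/-- `∏_{0 ≤ i < n} P(s_i, a_i, s_{i+1})` for a finite path from `init`. -/
noncomputable def MDP.pathWeight (M : MDP S A AP) (l : FinPath S A) : ℝ≥0∞ :=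
  M.weightFrom M.init l

/-- `μ` is the probability measure `Pr^π` induced by the policy `π`: it assigns
to the cylinder set of every valid `π`-consistent finite path the product of
the transition probabilities along that path. -/
def IsCylMeasure (M : MDP S A AP) (π : Policy S A)
    (μ : @MeasureTheory.Measure (InfPath S A) (M.cylSigma π)) : Prop :=
  ∀ l : FinPath S A, M.ValidFin l → ConsistentFin π l →
    μ (M.Cyl π l) = M.pathWeight l

/-- `{w ∈ Paths^π(s_init) : pre(w) ∩ Paths_fin,φ ≠ ∅}`: the `π`-consistent
infinite paths having some finite prefix in the given set of finite paths. -/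
def MDP.SatFinSet (M : MDP S A AP) (π : Policy S A)
    (Pfin : Set (FinPath S A)) : Set (InfPath S A) :=
  { w | w ∈ M.PathsSet π ∧ ∃ l ∈ Pfin, takeI w l.length = l }

/-- The augmented MDP `M'`: state `none` is `s_term`, action `none` is
`a_term`, and atomic proposition `none` is `alive`. -/
noncomputable def MDP.augment (M : MDP S A AP) : MDP (Option S) (Option A) (Option AP) where
  P s a s' :=
    match s, a, s' with
    | some s0, some a0, some s1 => M.P s0 a0 s1
    | _, none, none => 1
    | _, _, _ => 0
  enabled s :=
    match s with
    | some s0 => insert none (Option.some '' M.enabled s0)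
    | none => {none}
  init := some M.init
  label s :=
    match s with
    | some s0 => insert none (Option.some '' M.label s0)
    | none => ∅

/-- A finite path of `M` viewed as a finite path of the augmented MDP `M'`. -/
def liftFin (l : FinPath S A) : FinPath (Option S) (Option A) :=
  l.map fun p => (some p.1, some p.2)

/-- Membership in `Π'`: under `π'` every `π'`-consistent path of the augmented
MDP eventually takes the action `a_term` (= `none`). -/
def MDP.Terminating (M' : MDP (Option S) (Option A) (Option AP))
    (π' : Policy (Option S) (Option A)) : Prop :=
  ∀ w ∈ M'.PathsSet π', ∃ i : ℕ, (w i).1 = (none : Option A)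

/-- Syntax of LTL / LTLf formulas over atomic propositions `α`. -/
inductive LTL (α : Type) : Type
  | tru : LTL α
  | atom : α → LTL α
  | neg : LTL α → LTL α
  | conj : LTL α → LTL α → LTL α
  | next : LTL α → LTL α
  | untl : LTL α → LTL α → LTL α

variable {α : Type}

/-- Infinite-trace (LTL) satisfaction `σ, i ⊨ φ`. -/
def LTL.SatI (σ : ℕ → Set α) : ℕ → LTL α → Prop
  | _, .tru => True
  | i, .atom p => p ∈ σ i
  | i, .neg φ => ¬ LTL.SatI σ i φ
  | i, .conj φ ψ => LTL.SatI σ i φ ∧ LTL.SatI σ i ψ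
  | i, .next φ => LTL.SatI σ (i + 1) φ
  | i, .untl φ ψ =>
      ∃ j : ℕ, i ≤ j ∧ LTL.SatI σ j ψ ∧ ∀ k : ℕ, i ≤ k → k < j → LTL.SatI σ k φ

/-- Infinite-trace (LTL) satisfaction `σ ⊨ φ`. -/
def LTL.Sat (σ : ℕ → Set α) (φ : LTL α) : Prop := LTL.SatI σ 0 φ

/-- `G φ` abbreviates `¬(⊤ U ¬φ)`. -/
def LTL.G (φ : LTL α) : LTL α := .neg (.untl .tru (.neg φ))

/-- Finite-trace (LTLf) satisfaction `ρ, i ⊨ φ` (positions outside the trace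
carry the empty letter, which is never consulted from a position inside a
nonempty trace). -/
def LTL.SatFI (ρ : List (Set α)) : ℕ → LTL α → Prop
  | _, .tru => True
  | i, .atom p => p ∈ ρ.getD i ∅
  | i, .neg φ => ¬ LTL.SatFI ρ i φ
  | i, .conj φ ψ => LTL.SatFI ρ i φ ∧ LTL.SatFI ρ i ψ
  | i, .next φ => i + 1 < ρ.length ∧ LTL.SatFI ρ (i + 1) φ
  | i, .untl φ ψ =>
      ∃ j : ℕ, i ≤ j ∧ j < ρ.length ∧ LTL.SatFI ρ j ψ ∧
        ∀ k : ℕ, i ≤ k → k < j → LTL.SatFI ρ k φ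

/-- Finite-trace (LTLf) satisfaction `ρ ⊨ φ`. -/
def LTL.SatF (ρ : List (Set α)) (φ : LTL α) : Prop := LTL.SatFI ρ 0 φ

/-- The translation `t` from LTLf formulas over `α` to LTL formulas over
`Option α`, where the fresh proposition `alive` is `none`. -/
def LTL.trans : LTL α → LTL (Option α)
  | .tru => .tru
  | .atom p => .conj (.atom (some p)) (.atom none)
  | .neg φ => .neg φ.trans
  | .conj φ ψ => .conj φ.trans ψ.trans
  | .next φ => .next (.conj (.atom none) φ.trans)
  | .untl φ ψ => .untl φ.trans (.conj (.atom none) ψ.trans)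

/-- `g(φ) = t(φ) ∧ (alive U (G ¬alive))`. -/
def LTL.gtrans (φ : LTL α) : LTL (Option α) :=
  .conj φ.trans (.untl (.atom none) (LTL.G (.neg (.atom none))))

/-- The lift of a finite trace over `2^AP` to an infinite trace over
`2^(AP ∪ {alive})`: the `i`-th letter is `ρ_i ∪ {alive}` for `i < |ρ|`
and `∅` afterwards. -/
def liftTrace (ρ : List (Set α)) : ℕ → Set (Option α) := fun i =>
  if i < ρ.length then insert none (Option.some '' ρ.getD i ∅) else ∅

/-- `{w ∈ Paths^π(s_init) : w ⊨ φ}` for an LTLf formula `φ`: some finite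
prefix of `w` has labeling `L(s_0)…L(s_k)` in `L(φ)`. -/
def MDP.SatPhiSet (M : MDP S A AP) (π : Policy S A) (φ : LTL AP) :
    Set (InfPath S A) :=
  { w | w ∈ M.PathsSet π ∧ ∃ k : ℕ,
      LTL.SatF ((List.range (k + 1)).map fun i => M.label (M.stateAtI w i)) φ }

/-- `{w ∈ Paths^π(s_init) : L(w) ⊨ ψ}` for an LTL formula `ψ`: the labeling of
the infinite path `w` satisfies `ψ` under infinite-trace semantics. -/
def MDP.SatLTLSet {S A AP' : Type} (M : MDP S A AP') (π : Policy S A)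
    (ψ : LTL AP') : Set (InfPath S A) :=
  { w | w ∈ M.PathsSet π ∧ LTL.Sat (fun i => M.label (M.stateAtI w i)) ψ }

section Aux

variable {S A AP : Type}

/-! ### Basic finite/infinite path lemmas -/

@[simp] lemma length_takeI (w : InfPath S A) (n : ℕ) : (takeI w n).length = n := by
  simp [takeI]

lemma takeI_take (w : InfPath S A) {i n : ℕ} (h : i ≤ n) :
    (takeI w n).take i = takeI w i := by
  simp [takeI, ← List.map_take, List.take_range, Nat.min_eq_left h]

lemma getElem_takeI (w : InfPath S A) {i n : ℕ} (h : i < n) :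
    (takeI w n)[i]'(by simpa using h) = w i := by
  simp [takeI]

lemma lastState_takeI (M₀ : MDP S A AP) (w : InfPath S A) (n : ℕ) :
    M₀.lastState (takeI w n) = M₀.stateAtI w n := by
  cases n with
  | zero => simp [takeI, MDP.lastState, MDP.stateAtI]
  | succ n =>
      simp [takeI, MDP.lastState, MDP.stateAtI, List.range_succ]

lemma stateAtF_takeI (M₀ : MDP S A AP) (w : InfPath S A) {i n : ℕ} (h : i ≤ n) :
    M₀.stateAtF (takeI w n) i = M₀.stateAtI w i := by
  rw [MDP.stateAtF, takeI_take w h, lastState_takeI]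

lemma validFin_takeI (M₀ : MDP S A AP) {w : InfPath S A} (hw : M₀.ValidInf w) (n : ℕ) :
    M₀.ValidFin (takeI w n) := by
  intro i h
  have hi : i < n := by simpa using h
  have h1 := (hw i).1
  have h2 := (hw i).2
  constructor
  · rw [List.get_eq_getElem, getElem_takeI w hi, stateAtF_takeI M₀ w hi.le]
    exact h1
  · rw [List.get_eq_getElem, getElem_takeI w hi, stateAtF_takeI M₀ w hi.le]
    exact h2

lemma consistentFin_takeI {π : Policy S A} {w : InfPath S A}
    (hw : ∀ i : ℕ, (w i).1 = π (takeI w i)) (n : ℕ) :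
    ConsistentFin π (takeI w n) := by
  intro i h
  have hi : i < n := by simpa using h
  rw [List.get_eq_getElem, getElem_takeI w hi, takeI_take w hi.le]
  exact hw i

end Aux
section Aux2

variable {S A AP : Type}

/-- The sequence of labels `L(s_0)…L(s_n)` along a finite path of length `n`. -/
def labelsF (M : MDP S A AP) (l : FinPath S A) : List (Set AP) :=
  (List.range (l.length + 1)).map fun i => M.label (M.stateAtF l i)

@[simp] lemma length_labelsF (M : MDP S A AP) (l : FinPath S A) :
    (labelsF M l).length = l.length + 1 := by simp [labelsF]

lemma getD_labelsF (M : MDP S A AP) (l : FinPath S A) {i : ℕ} (h : i ≤ l.length) :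
    (labelsF M l).getD i ∅ = M.label (M.stateAtF l i) := by
  rw [List.getD_eq_getElem _ _ (by simpa [Nat.lt_succ] using h)]
  simp [labelsF]

/-- `ρ ⊨ φ` for the labels of the finite path `l`. -/
def SatNow (M : MDP S A AP) (φ : LTL AP) (l : FinPath S A) : Prop :=
  LTL.SatF (labelsF M l) φ

lemma labelsF_takeI (M : MDP S A AP) (w : InfPath S A) (k : ℕ) :
    labelsF M (takeI w k) =
      (List.range (k + 1)).map fun i => M.label (M.stateAtI w i) := by
  apply List.ext_getElem (by simp [labelsF])
  intro i h1 h2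
  simp only [labelsF, length_takeI, List.getElem_map, List.getElem_range]
  have hik : i ≤ k := by simpa [Nat.lt_succ] using h1
  rw [stateAtF_takeI M w hik]

/-- The set of minimal satisfying histories: valid, consistent, currently
satisfying `φ`, with no proper prefix satisfying `φ`. -/
def FirstSat (M : MDP S A AP) (π : Policy S A) (φ : LTL AP) : Set (FinPath S A) :=
  {p | M.ValidFin p ∧ ConsistentFin π p ∧ SatNow M φ p ∧
    ∀ k < p.length, ¬ SatNow M φ (p.take k)}

lemma cyl_subset_satPhi (M : MDP S A AP) (π : Policy S A) (φ : LTL AP)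
    {p : FinPath S A} (hp : SatNow M φ p) :
    M.Cyl π p ⊆ M.SatPhiSet π φ := by
  rintro w ⟨hw, hpre⟩
  refine ⟨hw, p.length, ?_⟩
  rw [← labelsF_takeI M w p.length, hpre]
  exact hp

lemma satPhi_eq_iUnion (M : MDP S A AP) (π : Policy S A) (φ : LTL AP) :
    M.SatPhiSet π φ = ⋃ p ∈ FirstSat M π φ, M.Cyl π p := by
  apply Set.Subset.antisymm
  · rintro w ⟨hw, hsat⟩
    classical
    have hex : ∃ k : ℕ,
        LTL.SatF ((List.range (k + 1)).map fun i => M.label (M.stateAtI w i)) φ := hsat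
    set k0 := Nat.find hex with hk0
    have hsat0 := Nat.find_spec hex
    refine Set.mem_biUnion (s := FirstSat M π φ) ?_ (show w ∈ M.Cyl π (takeI w k0) from ?_)
    · refine ⟨validFin_takeI M hw.1 k0, consistentFin_takeI hw.2 k0, ?_, ?_⟩
      · rw [SatNow, labelsF_takeI]; exact hsat0
      · intro k hk hkk
        have hklt : k < k0 := by simpa using hk
        rw [takeI_take w hklt.le] at hkk
        rw [SatNow, labelsF_takeI] at hkk
        exact Nat.find_min hex hklt hkk
    · exact ⟨hw, by simp⟩
  · refine Set.iUnion₂_subset fun p hp => cyl_subset_satPhi M π φ hp.2.2.1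

lemma cyl_disjoint_of_firstSat (M : MDP S A AP) (π : Policy S A) (φ : LTL AP)
    {p q : FinPath S A} (hp : p ∈ FirstSat M π φ) (hq : q ∈ FirstSat M π φ)
    (hne : p ≠ q) : Disjoint (M.Cyl π p) (M.Cyl π q) := by
  rw [Set.disjoint_left]
  rintro w ⟨hw1, hw2⟩ ⟨hw3, hw4⟩
  rcases Nat.lt_trichotomy p.length q.length with h | h | h
  · apply hq.2.2.2 p.length h
    have : p = q.take p.length := by
      rw [← hw4, takeI_take w h.le, hw2]
    rw [← this]; exact hp.2.2.1
  · apply hne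
    rw [← hw2, ← hw4, h]
  · apply hp.2.2.2 q.length h
    have : q = p.take q.length := by
      rw [← hw2, takeI_take w h.le, hw4]
    rw [← this]; exact hq.2.2.1

end Aux2
section Aux3

variable {S A AP : Type}

lemma measurableSet_cyl (M : MDP S A AP) (π : Policy S A) {l : FinPath S A}
    (hv : M.ValidFin l) (hc : ConsistentFin π l) :
    @MeasurableSet _ (M.cylSigma π) (M.Cyl π l) :=
  MeasurableSpace.measurableSet_generateFrom ⟨l, hv, hc, rfl⟩

lemma measure_iUnion_cyl (M : MDP S A AP) (π : Policy S A)
    (μ : @MeasureTheory.Measure (InfPath S A) (M.cylSigma π))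
    (hμ : IsCylMeasure M π μ) {β : Type} [Countable β] (D : Set β)
    (f : β → FinPath S A)
    (hval : ∀ p ∈ D, M.ValidFin (f p)) (hcons : ∀ p ∈ D, ConsistentFin π (f p))
    (hdisj : ∀ p ∈ D, ∀ q ∈ D, p ≠ q → Disjoint (M.Cyl π (f p)) (M.Cyl π (f q))) :
    μ (⋃ p ∈ D, M.Cyl π (f p)) = ∑' p : D, M.pathWeight (f p) := by
  letI : MeasurableSpace (InfPath S A) := M.cylSigma π
  haveI : Countable D := (Set.to_countable D).to_subtype
  have h1 : (⋃ p ∈ D, M.Cyl π (f p)) = ⋃ p : D, M.Cyl π (f (p : β)) := by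
    simp [Set.iUnion_subtype]
  have hd : Pairwise (Function.onFun Disjoint
      (fun p : D => M.Cyl π (f (p : β)))) := by
    intro p q hpq
    exact hdisj p p.2 q q.2 (fun h => hpq (Subtype.ext h))
  have hm : ∀ p : D, MeasurableSet (M.Cyl π (f (p : β))) := by
    intro p
    exact measurableSet_cyl M π (hval p p.2) (hcons p p.2)
  rw [h1, MeasureTheory.measure_iUnion hd hm]
  exact tsum_congr fun p => hμ (f p) (hval p p.2) (hcons p p.2)

end Aux3
section Aux4

variable {S A AP : Type}

@[simp] lemma augment_P_some (M : MDP S A AP) (s : S) (a : A) (s' : S) :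
    M.augment.P (some s) (some a) (some s') = M.P s a s' := rfl

@[simp] lemma augment_P_term (M : MDP S A AP) (s : Option S) :
    M.augment.P s none none = 1 := by cases s <;> rfl

@[simp] lemma augment_P_some_some_none (M : MDP S A AP) (s : S) (a : A) :
    M.augment.P (some s) (some a) none = 0 := rfl

@[simp] lemma augment_P_none_some (M : MDP S A AP) (a : A) (s' : Option S) :
    M.augment.P none (some a) s' = 0 := by cases s' <;> rfl

@[simp] lemma augment_P_term_some (M : MDP S A AP) (s : Option S) (s' : S) :
    M.augment.P s none (some s') = 0 := by cases s <;> rfl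

@[simp] lemma augment_enabled_some (M : MDP S A AP) (s : S) :
    M.augment.enabled (some s) = insert none (Option.some '' M.enabled s) := rfl

@[simp] lemma augment_enabled_none (M : MDP S A AP) :
    M.augment.enabled none = {none} := rfl

@[simp] lemma augment_label_some (M : MDP S A AP) (s : S) :
    M.augment.label (some s) = insert none (Option.some '' M.label s) := rfl

@[simp] lemma augment_label_none (M : MDP S A AP) :
    M.augment.label none = (∅ : Set (Option AP)) := rfl

@[simp] lemma augment_init (M : MDP S A AP) : M.augment.init = some M.init := rfl

@[simp] lemma mem_augment_enabled_some_iff (M : MDP S A AP) (s : S) (a : A) :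
    some a ∈ M.augment.enabled (some s) ↔ a ∈ M.enabled s := by
  simp

@[simp] lemma none_mem_augment_enabled (M : MDP S A AP) (s : Option S) :
    none ∈ M.augment.enabled s := by cases s <;> simp

/-! ### Lifting finite paths -/

@[simp] lemma length_liftFin (p : FinPath S A) : (liftFin p).length = p.length := by
  simp [liftFin]

lemma liftFin_take (p : FinPath S A) (i : ℕ) :
    (liftFin p).take i = liftFin (p.take i) := by
  simp [liftFin, List.map_take]

/-- A finite path of `M` followed by the terminating transition. -/
def termExt (p : FinPath S A) : FinPath (Option S) (Option A) :=
  liftFin p ++ [((none : Option A), (none : Option S))]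

@[simp] lemma length_termExt (p : FinPath S A) : (termExt p).length = p.length + 1 := by
  simp [termExt]

lemma termExt_take (p : FinPath S A) {i : ℕ} (h : i ≤ p.length) :
    (termExt p).take i = liftFin (p.take i) := by
  rw [termExt, List.take_append_of_le_length (by simpa using h), liftFin_take]

lemma termExt_inj {p q : FinPath S A} (h : termExt p = termExt q) : p = q := by
  have h2 : liftFin p = liftFin q := by
    have hl : p.length = q.length := by
      have := congrArg List.length h; simpa using this
    have := congrArg (List.take p.length) h
    rwa [termExt_take p le_rfl, termExt_take q hl.le, List.take_length,
      List.take_of_length_le hl.ge] at this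
  have : p.map (fun x : A × S => ((some x.1 : Option A), (some x.2 : Option S))) =
      q.map (fun x : A × S => ((some x.1 : Option A), (some x.2 : Option S))) := h2
  have hinj : Function.Injective
      (fun x : A × S => ((some x.1 : Option A), (some x.2 : Option S))) := by
    intro a b hab
    simpa [Prod.ext_iff] using hab
  exact List.map_injective_iff.2 hinj this

lemma lastState_liftFin (M : MDP S A AP) (p : FinPath S A) :
    M.augment.lastState (liftFin p) = some (M.lastState p) := by
  rw [MDP.lastState, MDP.lastState]
  have : (liftFin p).map Prod.snd = (p.map Prod.snd).map some := by
    simp [liftFin]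
  rw [this, augment_init]
  generalize p.map Prod.snd = l
  induction l with
  | nil => rfl
  | cons x xs ih =>
      cases xs with
      | nil => rfl
      | cons y ys => simpa using ih

lemma stateAtF_liftFin (M : MDP S A AP) (p : FinPath S A) (i : ℕ) :
    M.augment.stateAtF (liftFin p) i = some (M.stateAtF p i) := by
  rw [MDP.stateAtF, MDP.stateAtF, liftFin_take, lastState_liftFin]

lemma stateAtF_termExt (M : MDP S A AP) (p : FinPath S A) {i : ℕ} (h : i ≤ p.length) :
    M.augment.stateAtF (termExt p) i = some (M.stateAtF p i) := by
  rw [MDP.stateAtF, termExt_take p h, ← liftFin_take, ← MDP.stateAtF, stateAtF_liftFin]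

lemma stateAtF_termExt_top (M : MDP S A AP) (p : FinPath S A) :
    M.augment.stateAtF (termExt p) (p.length + 1) = none := by
  rw [MDP.stateAtF]
  rw [List.take_of_length_le (by simp)]
  rw [MDP.lastState, termExt, List.map_append]
  simp

end Aux4
section Aux5

variable {S A AP : Type}

lemma getElem_termExt_lt (p : FinPath S A) {i : ℕ} (h : i < p.length) :
    (termExt p)[i]'(by simp; omega) =
      ((some (p[i]'h).1 : Option A), (some (p[i]'h).2 : Option S)) := by
  unfold termExt
  rw [List.getElem_append_left (by simpa using h)]
  simp [liftFin]

lemma getElem_termExt_last (p : FinPath S A) :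
    (termExt p)[p.length]'(by simp) = ((none : Option A), (none : Option S)) := by
  unfold termExt
  rw [List.getElem_append_right (by simp)]
  simp

lemma validFin_termExt_iff (M : MDP S A AP) (p : FinPath S A) :
    M.augment.ValidFin (termExt p) ↔ M.ValidFin p := by
  constructor
  · intro h i hi
    have h2 := h i (by simp; omega)
    rw [List.get_eq_getElem, getElem_termExt_lt p hi,
      stateAtF_termExt M p (le_of_lt hi)] at h2
    rw [List.get_eq_getElem]
    constructor
    · have := h2.1
      simpa using this
    · have := h2.2
      simpa using this
  · intro h i hi
    have hi' : i < p.length + 1 := by simpa using hi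
    rw [List.get_eq_getElem]
    rcases Nat.lt_or_ge i p.length with hlt | hge
    · have h2 := h i hlt
      rw [getElem_termExt_lt p hlt, stateAtF_termExt M p (le_of_lt hlt)]
      rw [List.get_eq_getElem] at h2
      constructor
      · simpa using h2.1
      · simpa using h2.2
    · have hieq : i = p.length := by omega
      subst hieq
      rw [getElem_termExt_last p, stateAtF_termExt M p le_rfl]
      simp

lemma consistent_prefix_of_termExt {π' : Policy (Option S) (Option A)}
    {p : FinPath S A} (h : ConsistentFin π' (termExt p)) :
    (∀ i (hi : i < p.length),
        (some (p[i]'hi).1 : Option A) = π' (liftFin (p.take i))) ∧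
      π' (liftFin p) = none := by
  constructor
  · intro i hi
    have h2 := h i (by simp; omega)
    rw [List.get_eq_getElem, getElem_termExt_lt p hi,
      termExt_take p (le_of_lt hi)] at h2
    simpa using h2
  · have h2 := h p.length (by simp)
    rw [List.get_eq_getElem, getElem_termExt_last p, termExt_take p le_rfl,
      List.take_length] at h2
    simpa using h2.symm

lemma consistent_termExt_iff (π' : Policy (Option S) (Option A))
    (p : FinPath S A) :
    ConsistentFin π' (termExt p) ↔
      ((∀ i (hi : i < p.length),
          (some (p[i]'hi).1 : Option A) = π' (liftFin (p.take i))) ∧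
        π' (liftFin p) = none) := by
  constructor
  · exact consistent_prefix_of_termExt
  · rintro ⟨h1, h2⟩ i hi
    have hi' : i < p.length + 1 := by simpa using hi
    rw [List.get_eq_getElem]
    rcases Nat.lt_or_ge i p.length with hlt | hge
    · rw [getElem_termExt_lt p hlt, termExt_take p (le_of_lt hlt)]
      exact h1 i hlt
    · have hieq : i = p.length := by omega
      subst hieq
      rw [getElem_termExt_last p, termExt_take p le_rfl, List.take_length]
      exact h2.symm

lemma weightFrom_termExt (M : MDP S A AP) (p : FinPath S A) :
    ∀ s : S, M.augment.weightFrom (some s) (termExt p) = M.weightFrom s p := by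
  induction p with
  | nil =>
      intro s
      show M.augment.P (some s) none none * M.augment.weightFrom none [] = _
      simp [MDP.weightFrom]
  | cons x rest ih =>
      intro s
      show M.augment.P (some s) (some x.1) (some x.2) *
          M.augment.weightFrom (some x.2) (termExt rest) = _
      rw [ih x.2, augment_P_some]
      rfl

lemma pathWeight_termExt (M : MDP S A AP) (p : FinPath S A) :
    M.augment.pathWeight (termExt p) = M.pathWeight p := by
  rw [MDP.pathWeight, MDP.pathWeight, augment_init, weightFrom_termExt]

end Aux5
section Aux6

variable {α : Type}

lemma none_mem_liftTrace (ρ : List (Set α)) (i : ℕ) :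
    none ∈ liftTrace ρ i ↔ i < ρ.length := by
  unfold liftTrace
  split
  · simpa
  · rename_i h
    simp [h]

lemma some_mem_liftTrace (ρ : List (Set α)) (i : ℕ) (p : α) :
    some p ∈ liftTrace ρ i ↔ i < ρ.length ∧ p ∈ ρ.getD i ∅ := by
  unfold liftTrace
  split
  · rename_i h
    simp [h]
  · rename_i h
    simp [h]

/-- The key translation lemma: the lifted trace satisfies `t(φ)` at `i` iff the
finite trace satisfies `φ` at `i`. -/
lemma satI_liftTrace_trans (φ : LTL α) :
    ∀ (ρ : List (Set α)) (i : ℕ),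
      LTL.SatI (liftTrace ρ) i φ.trans ↔ LTL.SatFI ρ i φ := by
  induction φ with
  | tru => intro ρ i; simp [LTL.trans, LTL.SatI, LTL.SatFI]
  | atom p =>
      intro ρ i
      simp only [LTL.trans, LTL.SatI, LTL.SatFI]
      rw [some_mem_liftTrace, none_mem_liftTrace]
      constructor
      · rintro ⟨⟨_, h⟩, _⟩; exact h
      · intro h
        rcases Nat.lt_or_ge i ρ.length with hlt | hge
        · exact ⟨⟨hlt, h⟩, hlt⟩
        · rw [List.getD_eq_default _ _ hge] at h
          exact absurd h (Set.notMem_empty p)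
  | neg φ ih => intro ρ i; simp [LTL.trans, LTL.SatI, LTL.SatFI, ih]
  | conj φ ψ ihφ ihψ => intro ρ i; simp [LTL.trans, LTL.SatI, LTL.SatFI, ihφ, ihψ]
  | next φ ih =>
      intro ρ i
      simp only [LTL.trans, LTL.SatI, LTL.SatFI]
      rw [none_mem_liftTrace, ih]
  | untl φ ψ ihφ ihψ =>
      intro ρ i
      simp only [LTL.trans, LTL.SatI, LTL.SatFI]
      constructor
      · rintro ⟨j, hij, ⟨hj, hψ⟩, hφ⟩
        rw [none_mem_liftTrace] at hj
        exact ⟨j, hij, hj, (ihψ ρ j).1 hψ, fun k h1 h2 => (ihφ ρ k).1 (hφ k h1 h2)⟩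
      · rintro ⟨j, hij, hj, hψ, hφ⟩
        refine ⟨j, hij, ⟨?_, (ihψ ρ j).2 hψ⟩, fun k h1 h2 => (ihφ ρ k).2 (hφ k h1 h2)⟩
        rw [none_mem_liftTrace]
        exact hj

end Aux6
section Aux7

variable {S A AP : Type}

lemma getElem_liftFin (p : FinPath S A) {i : ℕ} (h : i < p.length) :
    (liftFin p)[i]'(by simpa using h) =
      ((some (p[i]'h).1 : Option A), (some (p[i]'h).2 : Option S)) := by
  simp [liftFin]

@[simp] lemma aug_stateAtI_zero (M : MDP S A AP) (w : InfPath (Option S) (Option A)) :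
    M.augment.stateAtI w 0 = some M.init := rfl

lemma aug_stateAtI_succ (M : MDP S A AP) (w : InfPath (Option S) (Option A)) (i : ℕ) :
    M.augment.stateAtI w (i + 1) = (w i).2 := rfl

lemma aug_snd_none_of_fst_none (M : MDP S A AP) {w : InfPath (Option S) (Option A)}
    (hw : M.augment.ValidInf w) {i : ℕ} (h : (w i).1 = none) : (w i).2 = none := by
  have hp := (hw i).2
  rw [h, aug_stateAtI_succ] at hp
  cases h2 : (w i).2 with
  | none => rfl
  | some s => rw [h2, augment_P_term_some] at hp; exact absurd hp (lt_irrefl 0)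

lemma aug_step_none (M : MDP S A AP) {w : InfPath (Option S) (Option A)}
    (hw : M.augment.ValidInf w) {i : ℕ} (h : M.augment.stateAtI w i = none) :
    w i = ((none : Option A), (none : Option S)) := by
  have he := (hw i).1
  rw [h, augment_enabled_none, Set.mem_singleton_iff] at he
  have h2 := aug_snd_none_of_fst_none M hw he
  exact Prod.ext he h2

lemma aug_tail_none (M : MDP S A AP) {w : InfPath (Option S) (Option A)}
    (hw : M.augment.ValidInf w) {i : ℕ} (h : M.augment.stateAtI w i = none) :
    ∀ j, i ≤ j → M.augment.stateAtI w j = none := by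
  intro j hj
  induction j, hj using Nat.le_induction with
  | base => exact h
  | succ j hij ih =>
      rw [aug_stateAtI_succ]
      have := aug_step_none M hw ih
      rw [this]

lemma aug_fst_none_of_term (M : MDP S A AP) {w : InfPath (Option S) (Option A)}
    (hw : M.augment.ValidInf w) {i : ℕ} {s : S}
    (hs : M.augment.stateAtI w i = some s)
    (hn : M.augment.stateAtI w (i + 1) = none) : (w i).1 = none := by
  cases h : (w i).1 with
  | none => rfl
  | some a =>
      have hp := (hw i).2
      rw [hs, h, hn, augment_P_some_some_none] at hp
      exact absurd hp (lt_irrefl 0)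

lemma aug_fst_some_of_next_some (M : MDP S A AP) {w : InfPath (Option S) (Option A)}
    (hw : M.augment.ValidInf w) {i : ℕ}
    (ht : (M.augment.stateAtI w (i + 1)).isSome) : ∃ a, (w i).1 = some a := by
  cases h : (w i).1 with
  | some a => exact ⟨a, rfl⟩
  | none =>
      have := aug_snd_none_of_fst_none M hw h
      rw [aug_stateAtI_succ, this] at ht
      simp at ht

lemma aug_alive_iff (M : MDP S A AP) (s : Option S) :
    (none : Option AP) ∈ M.augment.label s ↔ s.isSome := by
  cases s <;> simp

/-- Extract the pure part of a path of the augmented MDP. -/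
def unliftTake (a₀ : A) (d : S) (w : InfPath (Option S) (Option A)) (n : ℕ) :
    FinPath S A :=
  (List.range n).map fun i => ((w i).1.getD a₀, (w i).2.getD d)

@[simp] lemma length_unliftTake (a₀ : A) (d : S) (w : InfPath (Option S) (Option A))
    (n : ℕ) : (unliftTake a₀ d w n).length = n := by simp [unliftTake]

lemma liftFin_unliftTake (a₀ : A) (d : S) (w : InfPath (Option S) (Option A)) (n : ℕ)
    (h : ∀ i < n, (w i).1.isSome ∧ (w i).2.isSome) :
    liftFin (unliftTake a₀ d w n) = takeI w n := by
  apply List.ext_getElem (by simp [takeI])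
  intro i h1 h2
  have hi : i < n := by simpa using h2
  simp only [liftFin, unliftTake, List.getElem_map, List.getElem_range, takeI]
  obtain ⟨ha, hs⟩ := h i hi
  obtain ⟨a, ha⟩ := Option.isSome_iff_exists.1 ha
  obtain ⟨s, hs⟩ := Option.isSome_iff_exists.1 hs
  exact Prod.ext (by rw [ha]; rfl) (by rw [hs]; rfl)

lemma takeI_succ (w : InfPath S A) (n : ℕ) :
    takeI w (n + 1) = takeI w n ++ [w n] := by
  simp [takeI, List.range_succ]

/-- The finite paths of `M` whose terminal extension is a valid `π'`-consistent
history of `M'` and which satisfy `φ`. -/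
def TermSat (M : MDP S A AP) (π' : Policy (Option S) (Option A)) (φ : LTL AP) :
    Set (FinPath S A) :=
  {p | M.augment.ValidFin (termExt p) ∧ ConsistentFin π' (termExt p) ∧ SatNow M φ p}

/-- The labeling trace of a path extending `termExt p` is the lift of the
finite trace of `p`. -/
lemma trace_eq_liftTrace (M : MDP S A AP) {w : InfPath (Option S) (Option A)}
    (hw : M.augment.ValidInf w) {p : FinPath S A}
    (htake : takeI w (p.length + 1) = termExt p) :
    (fun i => M.augment.label (M.augment.stateAtI w i)) = liftTrace (labelsF M p) := by
  have hstate : ∀ i ≤ p.length,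
      M.augment.stateAtI w i = some (M.stateAtF p i) := by
    intro i hi
    rw [← stateAtF_takeI M.augment w (Nat.le_succ_of_le hi), htake,
      stateAtF_termExt M p hi]
  have htop : M.augment.stateAtI w (p.length + 1) = none := by
    rw [← stateAtF_takeI M.augment w le_rfl, htake, stateAtF_termExt_top]
  funext i
  rcases Nat.lt_or_ge i (p.length + 1) with hlt | hge
  · have hi : i ≤ p.length := by omega
    rw [hstate i hi, augment_label_some]
    unfold liftTrace
    rw [if_pos (by simpa using hlt), getD_labelsF M p hi]
  · have : M.augment.stateAtI w i = none := aug_tail_none M hw htop i hge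
    rw [this, augment_label_none]
    unfold liftTrace
    rw [if_neg (by simp; omega)]

lemma sat_gtrans_liftTrace (φ : LTL AP) (ρ : List (Set AP)) :
    LTL.Sat (liftTrace ρ) (LTL.gtrans φ) ↔ LTL.SatF ρ φ := by
  unfold LTL.Sat LTL.SatF LTL.gtrans
  show (LTL.SatI (liftTrace ρ) 0 φ.trans ∧
      LTL.SatI (liftTrace ρ) 0 (.untl (.atom none) (LTL.G (.neg (.atom none))))) ↔ _
  rw [satI_liftTrace_trans]
  refine and_iff_left ?_
  show ∃ j : ℕ, 0 ≤ j ∧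
      LTL.SatI (liftTrace ρ) j (LTL.G (.neg (.atom none))) ∧
      ∀ k : ℕ, 0 ≤ k → k < j → LTL.SatI (liftTrace ρ) k (.atom none)
  refine ⟨ρ.length, Nat.zero_le _, ?_, ?_⟩
  · show ¬ ∃ j : ℕ, ρ.length ≤ j ∧
        LTL.SatI (liftTrace ρ) j (LTL.neg (LTL.neg (LTL.atom none))) ∧
        ∀ k : ℕ, ρ.length ≤ k → k < j → LTL.SatI (liftTrace ρ) k LTL.tru
    rintro ⟨j, hj, hmem, -⟩
    have hmem2 : (none : Option AP) ∈ liftTrace ρ j := not_not.1 hmem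
    rw [none_mem_liftTrace] at hmem2
    omega
  · intro k _ hk
    show (none : Option AP) ∈ liftTrace ρ k
    rw [none_mem_liftTrace]
    exact hk

lemma cyl_termExt_subset_satLTL (M : MDP S A AP) (π' : Policy (Option S) (Option A))
    (φ : LTL AP) {p : FinPath S A} (hp : SatNow M φ p) :
    M.augment.Cyl π' (termExt p) ⊆ M.augment.SatLTLSet π' (LTL.gtrans φ) := by
  rintro w ⟨hw, hpre⟩
  rw [length_termExt] at hpre
  refine ⟨hw, ?_⟩
  unfold LTL.Sat
  have := trace_eq_liftTrace M hw.1 hpre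
  rw [show (fun i => M.augment.label (M.augment.stateAtI w i)) = liftTrace (labelsF M p)
    from this]
  exact (sat_gtrans_liftTrace φ (labelsF M p)).2 hp

lemma satLTL_eq_iUnion (M : MDP S A AP) (π' : Policy (Option S) (Option A))
    (φ : LTL AP) (a₀ : A) (d : S) :
    M.augment.SatLTLSet π' (LTL.gtrans φ) =
      ⋃ p ∈ TermSat M π' φ, M.augment.Cyl π' (termExt p) := by
  apply Set.Subset.antisymm
  · rintro w ⟨hw, hsat⟩
    obtain ⟨hsat1, j, -, hG, halive⟩ := hsat
    -- alive everywhere before j, dead from j on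
    have hdead : ∀ j' ≥ j, M.augment.stateAtI w j' = none := by
      intro j' hj'
      by_contra hne
      apply hG
      simp only [LTL.G, LTL.SatI]
      refine ⟨j', hj', ?_, fun k _ _ => trivial⟩
      rw [not_not]
      rw [aug_alive_iff, Option.isSome_iff_ne_none]
      exact hne
    have hlivebefore : ∀ k < j, (M.augment.stateAtI w k).isSome := by
      intro k hk
      have h2 : (none : Option AP) ∈ M.augment.label (M.augment.stateAtI w k) :=
        halive k (Nat.zero_le _) hk
      rwa [aug_alive_iff] at h2
    have hj1 : 1 ≤ j := by
      by_contra hj0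
      have hj0' : j = 0 := by omega
      have := hdead 0 (by omega)
      rw [aug_stateAtI_zero] at this
      exact Option.some_ne_none _ this
    obtain ⟨m, rfl⟩ : ∃ m, j = m + 1 := ⟨j - 1, by omega⟩
    -- purity of the first m steps
    have hpure : ∀ i < m, (w i).1.isSome ∧ (w i).2.isSome := by
      intro i hi
      have ht : (M.augment.stateAtI w (i + 1)).isSome := hlivebefore (i + 1) (by omega)
      obtain ⟨a, ha⟩ := aug_fst_some_of_next_some M hw.1 ht
      refine ⟨by rw [ha]; rfl, ?_⟩
      rw [← aug_stateAtI_succ]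
      exact ht
    -- step m is the termination step
    have hwm : w m = ((none : Option A), (none : Option S)) := by
      have hsm := hlivebefore m (by omega)
      obtain ⟨s, hs⟩ := Option.isSome_iff_exists.1 hsm
      have hn : M.augment.stateAtI w (m + 1) = none := hdead (m + 1) le_rfl
      have h1 := aug_fst_none_of_term M hw.1 hs hn
      exact Prod.ext h1 (aug_snd_none_of_fst_none M hw.1 h1)
    set p := unliftTake a₀ d w m with hp
    have hplen : p.length = m := by simp [hp]
    have hlift : liftFin p = takeI w m := liftFin_unliftTake a₀ d w m hpure
    have htake : takeI w (p.length + 1) = termExt p := by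
      rw [hplen, takeI_succ, hwm, termExt, hlift]
    have hmem : p ∈ TermSat M π' φ := by
      refine ⟨?_, ?_, ?_⟩
      · rw [← htake]; exact validFin_takeI _ hw.1 _
      · rw [← htake]; exact consistentFin_takeI hw.2 _
      · show LTL.SatF (labelsF M p) φ
        have := trace_eq_liftTrace M hw.1 htake
        rw [← sat_gtrans_liftTrace φ (labelsF M p)]
        unfold LTL.Sat
        rw [← this]
        exact ⟨hsat1, m + 1, Nat.zero_le _, hG, halive⟩
    refine Set.mem_biUnion hmem ⟨hw, ?_⟩
    rw [length_termExt]
    exact htake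
  · refine Set.iUnion₂_subset fun p hp => cyl_termExt_subset_satLTL M π' φ hp.2.2

lemma cyl_disjoint_of_termSat (M : MDP S A AP) (π' : Policy (Option S) (Option A))
    (φ : LTL AP) {p q : FinPath S A} (hp : p ∈ TermSat M π' φ)
    (hq : q ∈ TermSat M π' φ) (hne : p ≠ q) :
    Disjoint (M.augment.Cyl π' (termExt p)) (M.augment.Cyl π' (termExt q)) := by
  rw [Set.disjoint_left]
  rintro w ⟨hw1, hw2⟩ ⟨hw3, hw4⟩
  rw [length_termExt] at hw2 hw4
  -- helper: shorter length gives a contradiction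
  have key : ∀ p q : FinPath S A, takeI w (p.length + 1) = termExt p →
      takeI w (q.length + 1) = termExt q → p.length < q.length → False := by
    intro p q h1 h2 hlt
    have : termExt p = (termExt q).take (p.length + 1) := by
      rw [← h1, ← h2, takeI_take w (by omega)]
    rw [termExt_take q (by omega)] at this
    have hlast := List.getElem_of_eq this (by simp : p.length < (termExt p).length)
    rw [getElem_termExt_last] at hlast
    rw [getElem_liftFin _ (by simp; omega)] at hlast
    exact Option.some_ne_none _ (congrArg Prod.fst hlast).symm
  rcases Nat.lt_trichotomy p.length q.length with h | h | h
  · exact key p q hw2 hw4 h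
  · apply hne
    apply termExt_inj
    rw [← hw2, ← hw4, h]
  · exact key q p hw4 hw2 h

end Aux7
section Aux8

variable {S A AP : Type}

/-- Unlift a finite path of the augmented MDP to one of the base MDP, if pure. -/
def unlift (l : FinPath (Option S) (Option A)) : Option (FinPath S A) :=
  l.mapM fun q => q.1.bind fun a => q.2.map fun s => (a, s)

@[simp] lemma unlift_liftFin (p : FinPath S A) : unlift (liftFin p) = some p := by
  induction p with
  | nil => rfl
  | cons x xs ih =>
      unfold unlift at ih ⊢
      rw [show liftFin (x :: xs) = (some x.1, some x.2) :: liftFin xs from rfl,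
        List.mapM_cons, ih]
      rfl

lemma eq_liftFin_of_unlift {l : FinPath (Option S) (Option A)} {p : FinPath S A}
    (h : unlift l = some p) : l = liftFin p := by
  induction l generalizing p with
  | nil =>
      simp only [unlift, List.mapM_nil] at h
      cases h
      rfl
  | cons x xs ih =>
      unfold unlift at h
      rw [List.mapM_cons] at h
      cases hx1 : x.1 with
      | none => rw [hx1] at h; simp at h
      | some a =>
          cases hx2 : x.2 with
          | none => rw [hx1, hx2] at h; simp at h
          | some s =>
              rw [hx1, hx2] at h
              simp only [Option.bind_eq_bind, Option.bind_some, Option.map_some] at h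
              cases hxs : unlift xs with
              | none => rw [show xs.mapM _ = (none : Option (FinPath S A)) from hxs] at h; simp at h
              | some q =>
                  rw [show xs.mapM _ = some q from hxs] at h
                  simp only [Option.bind_eq_bind, Option.bind_some, Option.map_some, Option.some_inj] at h
                  cases h
                  rw [ih hxs]
                  simp [liftFin, ← hx1, ← hx2]

/-- `φ` is satisfied by the labels of some (improper) prefix of `p`. -/
def SatEver (M : MDP S A AP) (φ : LTL AP) (p : FinPath S A) : Prop :=
  ∃ k ≤ p.length, SatNow M φ (p.take k)

open Classical in
/-- The policy of the augmented MDP induced by a policy of `M`: mimic `π` until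
the history first satisfies `φ`, then terminate. -/
noncomputable def mkAug (M : MDP S A AP) (π : Policy S A) (φ : LTL AP) :
    Policy (Option S) (Option A) := fun l =>
  match unlift l with
  | some p => if SatEver M φ p then none else some (π p)
  | none => none

open Classical in
lemma mkAug_eq_of_unlift (M : MDP S A AP) (π : Policy S A) (φ : LTL AP)
    (p : FinPath S A) :
    mkAug M π φ (liftFin p) = if SatEver M φ p then none else some (π p) := by
  simp [mkAug]

lemma mkAug_isPolicy (M : MDP S A AP) {π : Policy S A} (hπ : M.IsPolicy π)
    (φ : LTL AP) : M.augment.IsPolicy (mkAug M π φ) := by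
  intro l
  unfold mkAug
  cases h : unlift l with
  | none => exact none_mem_augment_enabled M _
  | some p =>
      by_cases hs : SatEver M φ p
      · simp only [hs, if_true]
        exact none_mem_augment_enabled M _
      · simp only [hs, if_false]
        rw [eq_liftFin_of_unlift h, lastState_liftFin, augment_enabled_some]
        exact Set.mem_insert_of_mem _ ⟨π p, hπ p, rfl⟩

lemma firstSat_subset_termSat (M : MDP S A AP) (π : Policy S A) (φ : LTL AP) :
    FirstSat M π φ ⊆ TermSat M (mkAug M π φ) φ := by
  rintro p ⟨hval, hcons, hsat, hmin⟩
  refine ⟨(validFin_termExt_iff M p).2 hval, ?_, hsat⟩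
  rw [consistent_termExt_iff]
  constructor
  · intro i hi
    have hnot : ¬ SatEver M φ (p.take i) := by
      rintro ⟨k, hk, hsatk⟩
      rw [List.length_take] at hk
      have hki : k ≤ i := le_trans hk (min_le_left _ _)
      rw [List.take_take, Nat.min_eq_left hki] at hsatk
      exact hmin k (by omega) hsatk
    rw [mkAug_eq_of_unlift, if_neg hnot]
    have := hcons i hi
    rw [List.get_eq_getElem] at this
    rw [this]
  · rw [mkAug_eq_of_unlift, if_pos ⟨p.length, le_rfl, by rwa [List.take_length]⟩]

/-- The policy of `M` induced by a policy of the augmented MDP: mimic `π'` on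
lifted histories, choosing an arbitrary enabled action where `π'` terminates. -/
noncomputable def mkDow (M : MDP S A AP) (h : ∀ s : S, (M.enabled s).Nonempty)
    (π' : Policy (Option S) (Option A)) : Policy S A := fun l =>
  match π' (liftFin l) with
  | some a => a
  | none => (h (M.lastState l)).some

lemma mkDow_isPolicy (M : MDP S A AP) (h : ∀ s : S, (M.enabled s).Nonempty)
    {π' : Policy (Option S) (Option A)} (hπ' : M.augment.IsPolicy π') :
    M.IsPolicy (mkDow M h π') := by
  intro l
  unfold mkDow
  cases hc : π' (liftFin l) with
  | none => exact (h (M.lastState l)).some_mem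
  | some a =>
      have := hπ' (liftFin l)
      rw [hc, lastState_liftFin, augment_enabled_some] at this
      rcases this with h1 | h1
      · exact absurd h1 (by simp)
      · obtain ⟨b, hb, hba⟩ := h1
        cases hba
        simpa using hb

lemma termSat_consistent_mkDow (M : MDP S A AP) (h : ∀ s : S, (M.enabled s).Nonempty)
    (π' : Policy (Option S) (Option A)) (φ : LTL AP) {p : FinPath S A}
    (hp : p ∈ TermSat M π' φ) : ConsistentFin (mkDow M h π') p := by
  intro i hi
  have h1 := (consistent_prefix_of_termExt hp.2.1).1 i hi
  rw [List.get_eq_getElem]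
  unfold mkDow
  rw [← h1]

lemma termSat_cylM_disjoint (M : MDP S A AP)
    (π : Policy S A) (π' : Policy (Option S) (Option A)) (φ : LTL AP)
    {p q : FinPath S A} (hp : p ∈ TermSat M π' φ) (hq : q ∈ TermSat M π' φ)
    (hne : p ≠ q) : Disjoint (M.Cyl π p) (M.Cyl π q) := by
  rw [Set.disjoint_left]
  rintro w ⟨hw1, hw2⟩ ⟨hw3, hw4⟩
  have key : ∀ p q : FinPath S A, p ∈ TermSat M π' φ → q ∈ TermSat M π' φ →
      takeI w p.length = p → takeI w q.length = q → p.length < q.length → False := by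
    intro p q hp hq h1 h2 hlt
    have hpq : p = q.take p.length := by
      rw [← h2, takeI_take w hlt.le, h1]
    have hlast := (consistent_prefix_of_termExt hq.2.1).1 p.length hlt
    rw [← hpq, (consistent_prefix_of_termExt hp.2.1).2] at hlast
    exact Option.some_ne_none _ hlast
  rcases Nat.lt_trichotomy p.length q.length with hl | hl | hl
  · exact key p q hp hq hw2 hw4 hl
  · exact hne (by rw [← hw2, ← hw4, hl])
  · exact key q p hq hp hw4 hw2 hl

end Aux8
/-- Theorem 1: `max_{π ∈ Π} Pr(M^π ⊨ φ) =
max_{π' ∈ Π'} Pr(M'^{π'} ⊨ g(φ))`, where `Π` is the set of all policies of `M`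
and `Π'` is the set of all policies of the augmented MDP `M'`. -/
theorem max_prob_ltlf_eq_max_prob_ltl_augment
    {S A AP : Type} [Fintype S] [Fintype A] [Fintype AP]
    (M : MDP S A AP) (hM : M.IsWF) (φ : LTL AP)
    (μf : ∀ π : Policy S A,
      @MeasureTheory.Measure (InfPath S A) (M.cylSigma π))
    (hμf : ∀ π : Policy S A, M.IsPolicy π → IsCylMeasure M π (μf π))
    (μf' : ∀ π' : Policy (Option S) (Option A),
      @MeasureTheory.Measure (InfPath (Option S) (Option A))
        ((M.augment).cylSigma π'))
    (hμf' : ∀ π' : Policy (Option S) (Option A),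
      (M.augment).IsPolicy π' → IsCylMeasure (M.augment) π' (μf' π')) :
    (⨆ (π : Policy S A) (_ : M.IsPolicy π), μf π (M.SatPhiSet π φ)) =
      ⨆ (π' : Policy (Option S) (Option A)) (_ : (M.augment).IsPolicy π'),
        μf' π' ((M.augment).SatLTLSet π' (LTL.gtrans φ)) := by
  classical
  apply le_antisymm
  · refine iSup_le fun π => iSup_le fun hπ => ?_
    have hπ' : M.augment.IsPolicy (mkAug M π φ) := mkAug_isPolicy M hπ φ
    set π' := mkAug M π φ with hπ'def
    have hsub : FirstSat M π φ ⊆ TermSat M π' φ := firstSat_subset_termSat M π φ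
    have h1 : μf π (M.SatPhiSet π φ) = ∑' p : FirstSat M π φ, M.pathWeight p := by
      rw [satPhi_eq_iUnion M π φ]
      exact measure_iUnion_cyl M π (μf π) (hμf π hπ) (FirstSat M π φ) id
        (fun p hp => hp.1) (fun p hp => hp.2.1)
        (fun p hp q hq hne => cyl_disjoint_of_firstSat M π φ hp hq hne)
    have h2 : μf' π' (⋃ p ∈ FirstSat M π φ, M.augment.Cyl π' (termExt p))
        = ∑' p : FirstSat M π φ, M.augment.pathWeight (termExt p) :=
      measure_iUnion_cyl M.augment π' (μf' π') (hμf' π' hπ') (FirstSat M π φ) termExt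
        (fun p hp => (hsub hp).1) (fun p hp => (hsub hp).2.1)
        (fun p hp q hq hne => cyl_disjoint_of_termSat M π' φ (hsub hp) (hsub hq) hne)
    have h3 : (⋃ p ∈ FirstSat M π φ, M.augment.Cyl π' (termExt p)) ⊆
        M.augment.SatLTLSet π' (LTL.gtrans φ) :=
      Set.iUnion₂_subset fun p hp => cyl_termExt_subset_satLTL M π' φ (hsub hp).2.2
    have h4 : μf π (M.SatPhiSet π φ) ≤
        μf' π' (M.augment.SatLTLSet π' (LTL.gtrans φ)) := by
      rw [h1]
      calc ∑' p : FirstSat M π φ, M.pathWeight (p : FinPath S A)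
          = ∑' p : FirstSat M π φ, M.augment.pathWeight (termExt p) :=
            tsum_congr fun p => (pathWeight_termExt M p).symm
        _ = μf' π' (⋃ p ∈ FirstSat M π φ, M.augment.Cyl π' (termExt p)) := h2.symm
        _ ≤ _ := MeasureTheory.measure_mono h3
    exact le_trans h4 (le_iSup₂_of_le π' hπ' le_rfl)
  · refine iSup_le fun π' => iSup_le fun hπ' => ?_
    have hπ : M.IsPolicy (mkDow M hM.1 π') := mkDow_isPolicy M hM.1 hπ'
    set π := mkDow M hM.1 π' with hπdef
    have h1 : μf' π' (M.augment.SatLTLSet π' (LTL.gtrans φ))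
        = ∑' p : TermSat M π' φ, M.augment.pathWeight (termExt p) := by
      rw [satLTL_eq_iUnion M π' φ (hM.1 M.init).some M.init]
      exact measure_iUnion_cyl M.augment π' (μf' π') (hμf' π' hπ') (TermSat M π' φ)
        termExt (fun p hp => hp.1) (fun p hp => hp.2.1)
        (fun p hp q hq hne => cyl_disjoint_of_termSat M π' φ hp hq hne)
    have h2 : μf π (⋃ p ∈ TermSat M π' φ, M.Cyl π p)
        = ∑' p : TermSat M π' φ, M.pathWeight p :=
      measure_iUnion_cyl M π (μf π) (hμf π hπ) (TermSat M π' φ) id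
        (fun p hp => (validFin_termExt_iff M p).1 hp.1)
        (fun p hp => termSat_consistent_mkDow M hM.1 π' φ hp)
        (fun p hp q hq hne => termSat_cylM_disjoint M π π' φ hp hq hne)
    have h3 : (⋃ p ∈ TermSat M π' φ, M.Cyl π p) ⊆ M.SatPhiSet π φ :=
      Set.iUnion₂_subset fun p hp => cyl_subset_satPhi M π φ hp.2.2
    have h4 : μf' π' (M.augment.SatLTLSet π' (LTL.gtrans φ)) ≤
        μf π (M.SatPhiSet π φ) := by
      rw [h1]
      calc ∑' p : TermSat M π' φ, M.augment.pathWeight (termExt p)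
          = ∑' p : TermSat M π' φ, M.pathWeight (p : FinPath S A) :=
            tsum_congr fun p => pathWeight_termExt M p
        _ = μf π (⋃ p ∈ TermSat M π' φ, M.Cyl π p) := h2.symm
        _ ≤ _ := MeasureTheory.measure_mono h3
    exact le_trans h4 (le_iSup₂_of_le π hπ le_rfl)

end LTLfMDP
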